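/- Let B = (b_{i_1...i_m}) in T_{m,n} be a Z tensor (all off-diagonal entries nonpositive). Then the following are equivalent: (i) B is a B tensor; (ii) for each i, sum over i_2,...,i_m of b_{i i_2...i_m} > 0; (iii) B is strictly diagonally dominated, i.e., b_{i...i} > sum of |b_{i i_2...i_m}| over all (i_2,...,i_m) != (i,...,i), for each i. The analogous equivalence holds between B_0 tensors, nonnegative row sums, and diagonal dominance with >=. -/
import Mathlib


open Finset

noncomputable section

/-- The contraction `(A x^{m})_i` of an order-`m+1` tensor with `m` copies of `x`. -/
def contrT {m n : ℕ} (A : (Fin (m+1) → Fin n) → ℝ) (x : Fin n → ℝ) (i : Fin n) : ℝ :=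
  ∑ f : Fin m → Fin n, A (Fin.cons i f) * ∏ k, x (f k)

/-- `A x^M` for an order-`M` tensor. -/
def polyT {M n : ℕ} (A : (Fin M → Fin n) → ℝ) (x : Fin n → ℝ) : ℝ :=
  ∑ f : Fin M → Fin n, A f * ∏ k, x (f k)

/-- P tensor: for every nonzero `x`, `max_i x_i (A x^{m-1})_i > 0`. -/
def IsPTensor {m n : ℕ} (A : (Fin (m+1) → Fin n) → ℝ) : Prop :=
  ∀ x : Fin n → ℝ, x ≠ 0 → ∃ i : Fin n, 0 < x i * contrT A x i

/-- P₀ tensor: for every nonzero `x` there is `i` with `x i ≠ 0` and `x_i (A x^{m-1})_i ≥ 0`. -/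
def IsP0Tensor {m n : ℕ} (A : (Fin (m+1) → Fin n) → ℝ) : Prop :=
  ∀ x : Fin n → ℝ, x ≠ 0 → ∃ i : Fin n, x i ≠ 0 ∧ 0 ≤ x i * contrT A x i

def infNorm {n : ℕ} (x : Fin n → ℝ) : ℝ := ⨆ i, |x i|

/-- The operator `T_A(x) = ‖x‖₂^{2-m} A x^{m-1}` (order of the tensor is `m+1`). -/
def TA {m n : ℕ} (A : (Fin (m+1) → Fin n) → ℝ) (x : Fin n → ℝ) (i : Fin n) : ℝ :=
  if x = 0 then 0
  else (Real.sqrt (∑ j, x j ^ 2)) ^ ((2 : ℤ) - ((m : ℤ) + 1)) * contrT A x i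

/-- `α(T_A) = min_{‖x‖_∞ = 1} max_i x_i (T_A(x))_i`. -/
def alphaT {m n : ℕ} (A : (Fin (m+1) → Fin n) → ℝ) : ℝ :=
  sInf ((fun x => ⨆ i, x i * TA A x i) '' {x : Fin n → ℝ | infNorm x = 1})

/-- B tensor of order `m+1`. -/
def IsBTensor {m n : ℕ} (B : (Fin (m+1) → Fin n) → ℝ) : Prop :=
  ∀ i : Fin n, (0 < ∑ f : Fin m → Fin n, B (Fin.cons i f)) ∧
    ∀ g : Fin m → Fin n, g ≠ (fun _ => i) →
      B (Fin.cons i g) < (1 / (n : ℝ) ^ m) * ∑ f : Fin m → Fin n, B (Fin.cons i f)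

/-- B₀ tensor of order `m+1`. -/
def IsB0Tensor {m n : ℕ} (B : (Fin (m+1) → Fin n) → ℝ) : Prop :=
  ∀ i : Fin n, (0 ≤ ∑ f : Fin m → Fin n, B (Fin.cons i f)) ∧
    ∀ g : Fin m → Fin n, g ≠ (fun _ => i) →
      B (Fin.cons i g) ≤ (1 / (n : ℝ) ^ m) * ∑ f : Fin m → Fin n, B (Fin.cons i f)

open scoped Classical in
theorem stmt19 (m n : ℕ) (B : (Fin (m+1) → Fin n) → ℝ)
    (hZ : ∀ f : Fin (m+1) → Fin n, (¬ ∃ i : Fin n, f = fun _ => i) → B f ≤ 0) :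
    ((IsBTensor B ↔ ∀ i : Fin n, 0 < ∑ f : Fin m → Fin n, B (Fin.cons i f)) ∧
     (IsBTensor B ↔ ∀ i : Fin n,
        (∑ f ∈ Finset.univ.filter (fun f : Fin m → Fin n => f ≠ (fun _ => i)),
          |B (Fin.cons i f)|) < B (fun _ => i))) ∧
    ((IsB0Tensor B ↔ ∀ i : Fin n, 0 ≤ ∑ f : Fin m → Fin n, B (Fin.cons i f)) ∧
     (IsB0Tensor B ↔ ∀ i : Fin n,
        (∑ f ∈ Finset.univ.filter (fun f : Fin m → Fin n => f ≠ (fun _ => i)),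
          |B (Fin.cons i f)|) ≤ B (fun _ => i))) := by
  have hoff : ∀ (i : Fin n) (g : Fin m → Fin n), g ≠ (fun _ => i) → B (Fin.cons i g) ≤ 0 := by
    intro i g hg
    apply hZ
    rintro ⟨j, hj⟩
    apply hg
    have h0 : i = j := by simpa using congrFun hj 0
    funext k
    have := congrFun hj k.succ
    simpa [h0] using this
  have hdiag : ∀ i : Fin n, (Fin.cons i (fun _ => i) : Fin (m+1) → Fin n) = fun _ => i := by
    intro i; funext k; cases k using Fin.cases <;> simp
  have hsplit : ∀ i : Fin n, (∑ f : Fin m → Fin n, B (Fin.cons i f)) =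
      B (fun _ => i) + ∑ f ∈ Finset.univ.filter (fun f : Fin m → Fin n => f ≠ (fun _ => i)),
        B (Fin.cons i f) := by
    intro i
    rw [Finset.filter_ne', ← Finset.add_sum_erase _ _ (Finset.mem_univ (fun _ => i)), hdiag]
  have habs : ∀ i : Fin n,
      (∑ f ∈ Finset.univ.filter (fun f : Fin m → Fin n => f ≠ (fun _ => i)), |B (Fin.cons i f)|)
      = - ∑ f ∈ Finset.univ.filter (fun f : Fin m → Fin n => f ≠ (fun _ => i)),
          B (Fin.cons i f) := by
    intro i
    rw [← Finset.sum_neg_distrib]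
    refine Finset.sum_congr rfl fun f hf => ?_
    simp only [Finset.mem_filter] at hf
    exact abs_of_nonpos (hoff i f hf.2)
  have hpow : ∀ i : Fin n, 0 < (1 : ℝ) / (n : ℝ) ^ m := by
    intro i
    have : (0 : ℝ) < (n : ℝ) := by exact_mod_cast i.pos
    positivity
  have h1 : IsBTensor B ↔ ∀ i : Fin n, 0 < ∑ f : Fin m → Fin n, B (Fin.cons i f) := by
    constructor
    · intro h i; exact (h i).1
    · intro h i
      refine ⟨h i, fun g hg => ?_⟩
      have := hoff i g hg
      have := mul_pos (hpow i) (h i)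
      linarith
  have h3 : IsB0Tensor B ↔ ∀ i : Fin n, 0 ≤ ∑ f : Fin m → Fin n, B (Fin.cons i f) := by
    constructor
    · intro h i; exact (h i).1
    · intro h i
      refine ⟨h i, fun g hg => ?_⟩
      have := hoff i g hg
      have := mul_nonneg (le_of_lt (hpow i)) (h i)
      linarith
  refine ⟨⟨h1, h1.trans ?_⟩, ⟨h3, h3.trans ?_⟩⟩ <;>
  · refine forall_congr' fun i => ?_
    rw [habs i, hsplit i]
    constructor <;> intro <;> linarith
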